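/- Let k ≡ 2 (mod 4) with 2 ≤ k ≤ v-2, and let T, T' be tournaments on the same vertex set V of size v. If for every k-element subset K of V the number of edges of the boolean sum (T +̇ T') restricted to K is even, then T' = T. -/

import Mathlib

/-- A tournament on `V`: an orientation of the complete graph. -/
structure Tournament (V : Type*) where
  arc : V → V → Bool
  irrefl : ∀ x, arc x x = false
  total : ∀ x y, x ≠ y → arc x y = !arc y x

/-- The boolean sum of two tournaments: the graph whose edges are the pairs on which
the two tournaments disagree. -/
def boolSum {V : Type*} (T T' : Tournament V) : SimpleGraph V where
  Adj x y := x ≠ y ∧ T.arc x y ≠ T'.arc x y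
  symm := by
    constructor
    intro x y ⟨hne, hd⟩
    refine ⟨hne.symm, ?_⟩
    rw [T.total y x (Ne.symm hne), T'.total y x (Ne.symm hne)]
    simpa using hd
  loopless := ⟨fun x h => h.1 rfl⟩

instance {V : Type*} [DecidableEq V] (T T' : Tournament V) :
    DecidableRel (boolSum T T').Adj :=
  fun x y => inferInstanceAs (Decidable (x ≠ y ∧ T.arc x y ≠ T'.arc x y))

/-- Number of edges of the induced subgraph of `G` on a subset `K`. -/
def edgeCountOn {V : Type*} [Fintype V] [DecidableEq V] (G : SimpleGraph V)
    [DecidableRel G.Adj] (K : Finset V) : ℕ :=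
  (G.edgeFinset.filter (· ∈ K.sym2)).card

open Finset

section Aux

variable {V : Type*} [Fintype V] [DecidableEq V] [LinearOrder V]
  (G : SimpleGraph V) [DecidableRel G.Adj]

/-- Edges inside `S` as ordered pairs. -/
def pairFinset (S : Finset V) : Finset (V × V) :=
  (S ×ˢ S).filter (fun p => p.1 < p.2 ∧ G.Adj p.1 p.2)

/-- Sorted representative of an unordered pair. -/
def sortPair : Sym2 V → V × V :=
  Sym2.lift ⟨fun x y => (x ⊓ y, x ⊔ y), fun x y => by
    refine Prod.ext ?_ ?_ <;> simp [inf_comm, sup_comm]⟩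

lemma sortPair_mk (x y : V) : sortPair s(x, y) = (x ⊓ y, x ⊔ y) := rfl

lemma edgeCountOn_eq_pairFinset_card (S : Finset V) :
    (G.edgeFinset.filter (· ∈ S.sym2)).card = (pairFinset G S).card := by
  refine Finset.card_bij' (fun e _ => sortPair e) (fun p _ => Sym2.mk p.1 p.2) ?_ ?_ ?_ ?_
  · intro e he
    simp only [Finset.mem_filter, SimpleGraph.mem_edgeFinset] at he
    obtain ⟨he1, he2⟩ := he
    induction e using Sym2.ind with
    | _ x y =>
      rw [SimpleGraph.mem_edgeSet] at he1
      rw [Finset.mk_mem_sym2_iff] at he2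
      show sortPair s(x, y) ∈ pairFinset G S
      rw [sortPair_mk]
      rcases lt_or_gt_of_ne he1.ne with hlt | hlt
      · simp only [pairFinset, Finset.mem_filter, Finset.mem_product]
        rw [inf_eq_left.2 hlt.le, sup_eq_right.2 hlt.le]
        exact ⟨⟨he2.1, he2.2⟩, hlt, he1⟩
      · simp only [pairFinset, Finset.mem_filter, Finset.mem_product]
        rw [inf_eq_right.2 hlt.le, sup_eq_left.2 hlt.le]
        exact ⟨⟨he2.2, he2.1⟩, hlt, he1.symm⟩
  · intro p hp
    simp only [pairFinset, Finset.mem_filter, Finset.mem_product] at hp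
    obtain ⟨⟨h1, h2⟩, hlt, hadj⟩ := hp
    simp only [Finset.mem_filter, SimpleGraph.mem_edgeFinset, SimpleGraph.mem_edgeSet]
    exact ⟨hadj, (Finset.mk_mem_sym2_iff).2 ⟨h1, h2⟩⟩
  · intro e he
    induction e using Sym2.ind with
    | _ x y =>
      show Sym2.mk (sortPair s(x, y)).1 (sortPair s(x, y)).2 = s(x, y)
      rw [sortPair_mk]
      rcases le_total x y with hle | hle
      · rw [inf_eq_left.2 hle, sup_eq_right.2 hle]
      · rw [inf_eq_right.2 hle, sup_eq_left.2 hle]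
        exact Sym2.eq_swap
  · intro p hp
    simp only [pairFinset, Finset.mem_filter, Finset.mem_product] at hp
    obtain ⟨⟨h1, h2⟩, hlt, hadj⟩ := hp
    show sortPair (Sym2.mk p.1 p.2) = p
    rw [show Sym2.mk p.1 p.2 = s(p.1, p.2) from rfl, sortPair_mk]
    rw [inf_eq_left.2 hlt.le, sup_eq_right.2 hlt.le]

lemma pairFinset_insert {a : V} {S : Finset V} (ha : a ∉ S) :
    pairFinset G (insert a S) =
      pairFinset G S ∪ (S.filter (G.Adj a)).image
        (fun b => if a < b then (a, b) else (b, a)) := by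
  ext p
  simp only [pairFinset, Finset.mem_union, Finset.mem_filter, Finset.mem_product,
    Finset.mem_insert, Finset.mem_image]
  constructor
  · rintro ⟨⟨h1, h2⟩, hlt, hadj⟩
    rcases h1 with h1 | h1
    · rcases h2 with h2 | h2
      · exact absurd (h1.trans h2.symm) hlt.ne
      · refine Or.inr ⟨p.2, ⟨h2, h1 ▸ hadj⟩, ?_⟩
        rw [if_pos (h1 ▸ hlt)]
        exact Prod.ext h1.symm rfl
    · rcases h2 with h2 | h2
      · refine Or.inr ⟨p.1, ⟨h1, (h2 ▸ hadj).symm⟩, ?_⟩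
        rw [if_neg (by rw [← h2]; exact not_lt.2 hlt.le)]
        exact Prod.ext rfl h2.symm
      · exact Or.inl ⟨⟨h1, h2⟩, hlt, hadj⟩
  · rintro (⟨⟨h1, h2⟩, hlt, hadj⟩ | ⟨b, ⟨hb, hadj⟩, hp⟩)
    · exact ⟨⟨Or.inr h1, Or.inr h2⟩, hlt, hadj⟩
    · have hab : a ≠ b := fun hh => ha (hh ▸ hb)
      by_cases hlt : a < b
      · rw [if_pos hlt] at hp
        subst hp
        exact ⟨⟨Or.inl rfl, Or.inr hb⟩, hlt, hadj⟩
      · rw [if_neg hlt] at hp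
        subst hp
        exact ⟨⟨Or.inr hb, Or.inl rfl⟩, lt_of_le_of_ne (not_lt.1 hlt) (Ne.symm hab), hadj.symm⟩

lemma pairFinset_card_insert {a : V} {S : Finset V} (ha : a ∉ S) :
    (pairFinset G (insert a S)).card =
      (pairFinset G S).card + (S.filter (G.Adj a)).card := by
  rw [pairFinset_insert G ha, Finset.card_union_of_disjoint, Finset.card_image_of_injOn]
  · intro b hb c hc hbc
    simp only [Finset.coe_filter, Set.mem_setOf_eq] at hb hc
    have hab : a ≠ b := fun hh => ha (hh ▸ hb.1)
    have hac : a ≠ c := fun hh => ha (hh ▸ hc.1)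
    simp only at hbc
    by_cases h1 : a < b <;> by_cases h2 : a < c
    · rw [if_pos h1, if_pos h2] at hbc
      exact (Prod.ext_iff.1 hbc).2
    · rw [if_pos h1, if_neg h2] at hbc
      exact absurd (Prod.ext_iff.1 hbc).1 hac
    · rw [if_neg h1, if_pos h2] at hbc
      exact absurd (Prod.ext_iff.1 hbc).2 hac
    · rw [if_neg h1, if_neg h2] at hbc
      exact (Prod.ext_iff.1 hbc).1
  · rw [Finset.disjoint_left]
    intro p hp hq
    simp only [pairFinset, Finset.mem_filter, Finset.mem_product] at hp
    simp only [Finset.mem_image, Finset.mem_filter] at hq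
    obtain ⟨b, hb, hpb⟩ := hq
    by_cases hlt : a < b
    · rw [if_pos hlt] at hpb
      rw [← hpb] at hp
      exact ha hp.1.1
    · rw [if_neg hlt] at hpb
      rw [← hpb] at hp
      exact ha hp.1.2

end Aux

section Main

variable {V : Type*} [Fintype V] [DecidableEq V] [LinearOrder V]
  (G : SimpleGraph V) [DecidableRel G.Adj]

lemma edgeCountOn_insert {a : V} {S : Finset V} (ha : a ∉ S) :
    edgeCountOn G (insert a S) = edgeCountOn G S + (S.filter (G.Adj a)).card := by
  unfold edgeCountOn
  rw [edgeCountOn_eq_pairFinset_card, edgeCountOn_eq_pairFinset_card,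
    pairFinset_card_insert G ha]

lemma key_W (k : ℕ) (hk4 : k % 4 = 2)
    (h : ∀ K : Finset V, K.card = k → Even (edgeCountOn G K))
    (W : Finset V) (hWcard : W.card = k + 2) :
    ∀ a ∈ W, ∀ b ∈ W, a ≠ b →
      ((if G.Adj a b then 1 else 0 : ℕ) : ZMod 2) = (edgeCountOn G W : ZMod 2) := by
  have hself : ∀ z : ZMod 2, z + z = 0 := by decide
  have hkcast : ((k : ℕ) : ZMod 2) = 0 :=
    (ZMod.natCast_eq_zero_iff k 2).2 ⟨k / 2, by omega⟩
  set eW : ZMod 2 := (edgeCountOn G W : ZMod 2) with heW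
  set d : V → ZMod 2 := fun v => (((W.erase v).filter (G.Adj v)).card : ZMod 2) with hd
  -- Step (i)
  have hi : ∀ a ∈ W, ∀ b ∈ W, a ≠ b →
      ((if G.Adj a b then 1 else 0 : ℕ) : ZMod 2) = eW + d a + d b := by
    intro a ha b hb hab
    set K := (W.erase a).erase b with hK
    have hbWa : b ∈ W.erase a := Finset.mem_erase.2 ⟨hab.symm, hb⟩
    have hbK : b ∉ K := Finset.notMem_erase b _
    have haK : a ∉ K := fun hh =>
      (Finset.notMem_erase a W) (Finset.mem_of_mem_erase hh)
    have h1 : insert b K = W.erase a := Finset.insert_erase hbWa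
    have haWb : a ∈ W.erase b := Finset.mem_erase.2 ⟨hab, ha⟩
    have h1' : insert a K = W.erase b := by
      rw [hK, Finset.erase_right_comm]
      exact Finset.insert_erase haWb
    have haWa : a ∉ W.erase a := Finset.notMem_erase a W
    have hbWb : b ∉ W.erase b := Finset.notMem_erase b W
    have hKcard : K.card = k := by
      rw [hK, Finset.card_erase_of_mem hbWa, Finset.card_erase_of_mem ha, hWcard]
      omega
    have hKzero : ((edgeCountOn G K : ℕ) : ZMod 2) = 0 :=
      (ZMod.natCast_eq_zero_iff _ 2).2 (h K hKcard).two_dvd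
    have e1 : edgeCountOn G W
        = edgeCountOn G (W.erase a) + ((W.erase a).filter (G.Adj a)).card := by
      conv_lhs => rw [← Finset.insert_erase ha]
      exact edgeCountOn_insert G haWa
    have e2 : edgeCountOn G (W.erase a) = edgeCountOn G K + (K.filter (G.Adj b)).card := by
      conv_lhs => rw [← h1]
      exact edgeCountOn_insert G hbK
    have hba : (if G.Adj b a then 1 else 0 : ℕ) = (if G.Adj a b then 1 else 0 : ℕ) := by
      by_cases hc : G.Adj a b
      · rw [if_pos hc, if_pos (G.adj_symm hc)]
      · rw [if_neg hc, if_neg (fun hh => hc (G.adj_symm hh))]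
    have e3 : ((W.erase a).filter (G.Adj a)).card
        = (K.filter (G.Adj a)).card + (if G.Adj a b then 1 else 0 : ℕ) := by
      rw [← h1, Finset.filter_insert]
      by_cases hc : G.Adj a b
      · rw [if_pos hc, if_pos hc,
          Finset.card_insert_of_notMem (fun hh => hbK (Finset.mem_of_mem_filter b hh))]
      · rw [if_neg hc, if_neg hc]
        omega
    have e4 : ((W.erase b).filter (G.Adj b)).card
        = (K.filter (G.Adj b)).card + (if G.Adj a b then 1 else 0 : ℕ) := by
      rw [← h1', Finset.filter_insert, ← hba]
      by_cases hc : G.Adj b a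
      · rw [if_pos hc, if_pos hc,
          Finset.card_insert_of_notMem (fun hh => haK (Finset.mem_of_mem_filter a hh))]
      · rw [if_neg hc, if_neg hc]
        omega
    have hNat : edgeCountOn G W + ((W.erase a).filter (G.Adj a)).card
          + ((W.erase b).filter (G.Adj b)).card
        = edgeCountOn G K + 2 * (K.filter (G.Adj a)).card + 2 * (K.filter (G.Adj b)).card
          + 3 * (if G.Adj a b then 1 else 0 : ℕ) := by
      omega
    have hZ := congrArg (fun n : ℕ => (n : ZMod 2)) hNat
    push_cast at hZ
    rw [hKzero] at hZ
    show ((if G.Adj a b then 1 else 0 : ℕ) : ZMod 2) = eW + d a + d b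
    rw [heW, hd]
    push_cast
    have h2 : (2 : ZMod 2) = 0 := rfl
    linear_combination -hZ - ((if G.Adj a b then (1 : ZMod 2) else 0)
      + ((Finset.filter (G.Adj a) K).card : ZMod 2)
      + ((Finset.filter (G.Adj b) K).card : ZMod 2)) * h2
  -- Step (ii)
  have hii : ∀ a : V, d a = ∑ b ∈ W.erase a, ((if G.Adj a b then 1 else 0 : ℕ) : ZMod 2) := by
    intro a
    rw [hd]
    simp only
    rw [Finset.card_filter]
    push_cast
    rfl
  set Ssum : ZMod 2 := ∑ b ∈ W, d b with hS
  have hda : ∀ a ∈ W, d a = eW + Ssum := by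
    intro a ha
    have h1 : d a = ∑ b ∈ W.erase a, (eW + d a + d b) :=
      (hii a).trans (Finset.sum_congr rfl (fun b hb =>
        hi a ha b (Finset.mem_of_mem_erase hb)
          (fun hh => (Finset.mem_erase.1 hb).1 hh.symm)))
    rw [Finset.sum_add_distrib, Finset.sum_const, Finset.card_erase_of_mem ha, hWcard,
      Finset.sum_erase_eq_sub ha, nsmul_eq_mul] at h1
    have hcoef : (((k + 2 - 1 : ℕ)) : ZMod 2) = 1 := by
      rw [show k + 2 - 1 = k + 1 from rfl]
      push_cast [hkcast]
      decide
    rw [hcoef, one_mul, ← hS] at h1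
    linear_combination h1
  have hSzero : Ssum = 0 := by
    have h1 : Ssum = ∑ a ∈ W, (eW + Ssum) := by
      rw [hS]
      exact Finset.sum_congr rfl hda
    rw [Finset.sum_const, hWcard, nsmul_eq_mul] at h1
    have hcoef : (((k + 2 : ℕ)) : ZMod 2) = 0 := by
      push_cast [hkcast]
      decide
    rw [hcoef, zero_mul] at h1
    exact h1
  intro a ha b hb hab
  have h2 : (2 : ZMod 2) = 0 := rfl
  rw [hi a ha b hb hab, hda a ha, hda b hb, hSzero]
  linear_combination eW * h2

end Main

section Final

variable {V : Type*} [Fintype V] [DecidableEq V] [LinearOrder V]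
  (G : SimpleGraph V) [DecidableRel G.Adj]

lemma no_adj (k : ℕ) (hk2 : 2 ≤ k) (hkv : k + 2 ≤ Fintype.card V) (hk4 : k % 4 = 2)
    (h : ∀ K : Finset V, K.card = k → Even (edgeCountOn G K)) :
    ∀ u w : V, ¬ G.Adj u w := by
  intro x y hxy
  -- every pair of distinct vertices is adjacent
  have hAdjall : ∀ u w : V, u ≠ w → G.Adj u w := by
    intro u w huw
    have h4 : ({x, y, u, w} : Finset V).card ≤ k + 2 := by
      refine le_trans (le_trans (Finset.card_insert_le _ _) ?_) (by omega : 4 ≤ k + 2)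
      refine Nat.succ_le_succ (le_trans (Finset.card_insert_le _ _) ?_)
      refine Nat.succ_le_succ (le_trans (Finset.card_insert_le _ _) ?_)
      simp
    obtain ⟨W, hsub, hWcard⟩ := Finset.exists_superset_card_eq h4 hkv
    have hx : x ∈ W := hsub (by simp)
    have hy : y ∈ W := hsub (by simp)
    have hu : u ∈ W := hsub (by simp)
    have hw : w ∈ W := hsub (by simp)
    have h1 := key_W G k hk4 h W hWcard x hx y hy hxy.ne
    have h2 := key_W G k hk4 h W hWcard u hu w hw huw
    rw [if_pos hxy] at h1
    rw [← h1] at h2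
    by_contra hnadj
    rw [if_neg hnadj] at h2
    norm_num at h2
  -- pick a k-set; it is a complete graph on k vertices, which has oddly many edges
  obtain ⟨K, -, hKcard⟩ := Finset.exists_superset_card_eq
    (s := (∅ : Finset V)) (by simp) (by omega : k ≤ Fintype.card V)
  have heven := h K hKcard
  have hcount : edgeCountOn G K = ((K ×ˢ K).filter (fun p => p.1 < p.2)).card := by
    unfold edgeCountOn
    rw [edgeCountOn_eq_pairFinset_card]
    unfold pairFinset
    congr 1
    refine Finset.filter_congr ?_
    intro p hp
    exact ⟨fun hh => hh.1, fun hlt => ⟨hlt, hAdjall _ _ (ne_of_lt hlt)⟩⟩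
  have hGt : ((K ×ˢ K).filter (fun p => p.1 < p.2)).card
      = ((K ×ˢ K).filter (fun p => p.2 < p.1)).card := by
    refine Finset.card_bij' (fun p _ => (p.2, p.1)) (fun p _ => (p.2, p.1)) ?_ ?_ ?_ ?_
    · intro p hp
      simp only [Finset.mem_filter, Finset.mem_product] at hp ⊢
      exact ⟨⟨hp.1.2, hp.1.1⟩, hp.2⟩
    · intro p hp
      simp only [Finset.mem_filter, Finset.mem_product] at hp ⊢
      exact ⟨⟨hp.1.2, hp.1.1⟩, hp.2⟩
    · intro p _; rfl
    · intro p _; rfl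
  have hdisj : Disjoint ((K ×ˢ K).filter (fun p => p.1 < p.2))
      ((K ×ˢ K).filter (fun p => p.2 < p.1)) := by
    rw [Finset.disjoint_left]
    intro p h1 h2
    simp only [Finset.mem_filter] at h1 h2
    exact absurd h2.2 (lt_asymm h1.2)
  have hUnion : (K ×ˢ K).filter (fun p => p.1 < p.2) ∪ (K ×ˢ K).filter (fun p => p.2 < p.1)
      = K.offDiag := by
    ext p
    simp only [Finset.mem_union, Finset.mem_filter, Finset.mem_product, Finset.mem_offDiag]
    constructor
    · rintro (⟨⟨h1, h2⟩, hlt⟩ | ⟨⟨h1, h2⟩, hlt⟩)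
      · exact ⟨h1, h2, ne_of_lt hlt⟩
      · exact ⟨h1, h2, (ne_of_lt hlt).symm⟩
    · rintro ⟨h1, h2, hne⟩
      rcases lt_or_gt_of_ne hne with hlt | hlt
      · exact Or.inl ⟨⟨h1, h2⟩, hlt⟩
      · exact Or.inr ⟨⟨h1, h2⟩, hlt⟩
  have h2card : 2 * ((K ×ˢ K).filter (fun p => p.1 < p.2)).card = k * k - k := by
    rw [two_mul]
    nth_rewrite 2 [hGt]
    rw [← Finset.card_union_of_disjoint hdisj, hUnion, Finset.offDiag_card, hKcard]
  obtain ⟨t, ht⟩ := heven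
  rw [hcount] at ht
  obtain ⟨m, hm⟩ : ∃ m, k = 4 * m + 2 := ⟨k / 4, by omega⟩
  obtain ⟨M, hM⟩ : ∃ M, m * m = M := ⟨_, rfl⟩
  have hkk : k * k = 16 * M + 16 * m + 4 := by rw [hm, ← hM]; ring
  rw [hkk, ht] at h2card
  omega

end Final

/-- If `k ≡ 2 (mod 4)`, `2 ≤ k ≤ v - 2`, and on every `k`-set the number of edges of
the boolean sum `T +̇ T'` is even, then `T' = T`. -/
theorem tournament_eq_of_boolSum_even {V : Type*} [Fintype V] [DecidableEq V]
    (T T' : Tournament V) (k : ℕ)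
    (hk2 : 2 ≤ k) (hkv : k + 2 ≤ Fintype.card V) (hk4 : k % 4 = 2)
    (h : ∀ K : Finset V, K.card = k → Even (edgeCountOn (boolSum T T') K)) :
    T' = T := by
  letI : LinearOrder V := LinearOrder.lift' (Fintype.equivFin V) (Fintype.equivFin V).injective
  have hempty := no_adj (boolSum T T') k hk2 hkv hk4 h
  have harc : T'.arc = T.arc := by
    funext u w
    by_cases huw : u = w
    · subst huw; rw [T.irrefl, T'.irrefl]
    · by_contra hne
      exact hempty u w (show u ≠ w ∧ T.arc u w ≠ T'.arc u w from ⟨huw, fun hh => hne hh.symm⟩)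
  cases T with
  | mk a i t =>
    cases T' with
    | mk a' i' t' =>
      have : a' = a := harc
      subst this
      rfl
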